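/- Let ℏ > 0 and a > 0. Let v̂ : ℤ² → ℂ satisfy Σ_{μ∈ℤ²} ‖μ‖² |v̂(μ)| < ∞ (where μ ∈ ℤ² is identified with the corresponding vector in ℝ²). Let g : ℝ²×ℝ² → ℂ be Lebesgue integrable, let η : ℝ² → ℂ be measurable and bounded, and let φ : ℝ² → ℂ be twice continuously differentiable with M := sup_{k∈ℝ²} ‖D²φ(k)‖ < ∞ (operator norm of the second derivative as a bilinear map). Then the lattice-sum Taylor-remainder pairing obeys the bound: | Σ_{μ∈ℤ²} v̂(μ) ∫_{ℝ²}∫_{ℝ²} e^{i(μ·x)/a} g(x,k) η(x) · (1/ℏ) [ φ(k − (ℏ/(2a))μ) − φ(k + (ℏ/(2a))μ) + (ℏ/a) (μ·∇φ(k)) ] dx dk | ≤ (ℏ/(4a²)) · ( Σ_{μ∈ℤ²} ‖μ‖² |v̂(μ)| ) · ‖g‖_{L¹} · ‖η‖_{∞} · M. -/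

import Mathlib

open MeasureTheory Complex

noncomputable section

variable {E : Type*} [NormedAddCommGroup E] [NormedSpace ℝ E]

lemma fderiv_fderiv_norm_le {φ : E → ℂ} {M : ℝ} (hφ : ContDiff ℝ 2 φ)
    (hM : ∀ q, ‖iteratedFDeriv ℝ 2 φ q‖ ≤ M) (x : E) :
    ‖fderiv ℝ (fderiv ℝ φ) x‖ ≤ M := by
  have hM0 : 0 ≤ M := le_trans (norm_nonneg _) (hM x)
  refine ContinuousLinearMap.opNorm_le_bound _ hM0 fun u => ?_
  refine ContinuousLinearMap.opNorm_le_bound _ (by positivity) fun w => ?_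
  have := (iteratedFDeriv ℝ 2 φ x).le_opNorm ![u, w]
  rw [iteratedFDeriv_two_apply φ x ![u, w]] at this
  simp only [Matrix.cons_val_zero, Matrix.cons_val_one, Matrix.head_cons,
    Fin.prod_univ_two] at this
  calc ‖fderiv ℝ (fderiv ℝ φ) x u w‖ ≤ ‖iteratedFDeriv ℝ 2 φ x‖ * (‖u‖ * ‖w‖) := this
    _ ≤ M * (‖u‖ * ‖w‖) := mul_le_mul_of_nonneg_right (hM x) (by positivity)
    _ = M * ‖u‖ * ‖w‖ := by ring

lemma fderiv_lip {φ : E → ℂ} {M : ℝ} (hφ : ContDiff ℝ 2 φ)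
    (hM : ∀ q, ‖iteratedFDeriv ℝ 2 φ q‖ ≤ M) (x y : E) :
    ‖fderiv ℝ φ x - fderiv ℝ φ y‖ ≤ M * ‖x - y‖ := by
  have hd : ∀ z ∈ (Set.univ : Set E), DifferentiableAt ℝ (fderiv ℝ φ) z := fun z _ =>
    (hφ.fderiv_right (m := 1) (le_refl _)).differentiable one_ne_zero z
  exact convex_univ.norm_image_sub_le_of_norm_fderiv_le hd
    (fun z _ => fderiv_fderiv_norm_le hφ hM z) (Set.mem_univ y) (Set.mem_univ x)

lemma taylor_half {φ : E → ℂ} {M : ℝ} (hφ : ContDiff ℝ 2 φ)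
    (hM : ∀ q, ‖iteratedFDeriv ℝ 2 φ q‖ ≤ M) (k h : E) :
    ‖φ (k + h) - φ k - fderiv ℝ φ k h‖ ≤ M / 2 * ‖h‖ ^ 2 := by
  have hd : Differentiable ℝ φ := hφ.differentiable two_ne_zero
  set u' : ℝ → ℂ := fun t => fderiv ℝ φ (k + t • h) h with hu'
  have hline : Continuous fun t : ℝ => k + t • h := by continuity
  have hu : ∀ t ∈ Set.uIcc (0:ℝ) 1, HasDerivAt (fun t => φ (k + t • h)) (u' t) t := by
    intro t _
    have h1 : HasDerivAt (fun t : ℝ => k + t • h) h t := by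
      simpa using ((hasDerivAt_id t).smul_const h).const_add k
    exact (hd (k + t • h)).hasFDerivAt.comp_hasDerivAt t h1
  have hcont : Continuous u' :=
    (ContinuousLinearMap.apply ℝ ℂ h).continuous.comp
      ((hφ.continuous_fderiv two_ne_zero).comp hline)
  have hint := intervalIntegral.integral_eq_sub_of_hasDerivAt hu
    (hcont.intervalIntegrable 0 1)
  have heq : φ (k + h) - φ k - fderiv ℝ φ k h
      = ∫ t in (0:ℝ)..1, (u' t - fderiv ℝ φ k h) := by
    rw [intervalIntegral.integral_sub (hcont.intervalIntegrable 0 1)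
      intervalIntegrable_const, hint, intervalIntegral.integral_const]
    simp
  rw [heq]
  have hM0 : 0 ≤ M := le_trans (norm_nonneg _) (hM k)
  have hb : ‖∫ t in (0:ℝ)..1, (u' t - fderiv ℝ φ k h)‖
      ≤ |∫ t in (0:ℝ)..1, M * ‖h‖ ^ 2 * t| := by
    refine intervalIntegral.norm_integral_le_abs_of_norm_le ?_
      ((continuous_const.mul continuous_id).intervalIntegrable 0 1)
    refine (ae_restrict_iff' measurableSet_uIoc).2 (Filter.Eventually.of_forall ?_)
    intro t ht
    rw [Set.uIoc_of_le zero_le_one] at ht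
    have ht0 : 0 ≤ t := le_of_lt ht.1
    calc ‖u' t - fderiv ℝ φ k h‖
        = ‖(fderiv ℝ φ (k + t • h) - fderiv ℝ φ k) h‖ := by
          simp [hu', ContinuousLinearMap.sub_apply]
      _ ≤ ‖fderiv ℝ φ (k + t • h) - fderiv ℝ φ k‖ * ‖h‖ :=
          ContinuousLinearMap.le_opNorm _ h
      _ ≤ M * ‖(k + t • h) - k‖ * ‖h‖ :=
          mul_le_mul_of_nonneg_right (fderiv_lip hφ hM _ _) (norm_nonneg h)
      _ = M * ‖h‖ ^ 2 * t := by
          rw [add_sub_cancel_left, norm_smul, Real.norm_eq_abs, _root_.abs_of_nonneg ht0]; ring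
  refine hb.trans (le_of_eq ?_)
  rw [intervalIntegral.integral_const_mul, integral_id]
  rw [_root_.abs_of_nonneg (by positivity)]
  ring

/-- symmetric second-order remainder bound -/
lemma sym_remainder {φ : E → ℂ} {M : ℝ} (hφ : ContDiff ℝ 2 φ)
    (hM : ∀ q, ‖iteratedFDeriv ℝ 2 φ q‖ ≤ M) (k h : E) :
    ‖φ (k - h) - φ (k + h) + 2 * fderiv ℝ φ k h‖ ≤ M * ‖h‖ ^ 2 := by
  have e1 := taylor_half hφ hM k h
  have e2 := taylor_half hφ hM k (-h)
  rw [norm_neg] at e2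
  have key : φ (k - h) - φ (k + h) + 2 * fderiv ℝ φ k h
      = (φ (k + (-h)) - φ k - fderiv ℝ φ k (-h)) - (φ (k + h) - φ k - fderiv ℝ φ k h) := by
    rw [_root_.map_neg, ← sub_eq_add_neg]; ring
  rw [key]
  calc ‖_ - _‖ ≤ ‖φ (k + (-h)) - φ k - fderiv ℝ φ k (-h)‖
        + ‖φ (k + h) - φ k - fderiv ℝ φ k h‖ := norm_sub_le _ _
    _ ≤ M / 2 * ‖h‖ ^ 2 + M / 2 * ‖h‖ ^ 2 := add_le_add e2 e1
    _ = M * ‖h‖ ^ 2 := by ring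


/-- The point of `ℝ²` (with the Euclidean norm) corresponding to a lattice point
`μ ∈ ℤ²`. -/
def latticeVec (μ : ℤ × ℤ) : EuclideanSpace ℝ (Fin 2) :=
  (WithLp.equiv 2 (Fin 2 → ℝ)).symm ![(μ.1 : ℝ), (μ.2 : ℝ)]

/-- Weak-form error estimate for the external periodic potential term:
for Fourier coefficients `v̂` with `Σ ‖μ‖²|v̂(μ)| < ∞`, integrable `g`, bounded
measurable `η`, and `φ ∈ C²` with `‖D²φ‖ ≤ M`, the lattice-sum pairing against the
second-order symmetric Taylor remainder of `φ` is bounded by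
`(ℏ/(4a²)) (Σ ‖μ‖²|v̂(μ)|) ‖g‖_{L¹} ‖η‖_∞ M`. -/
theorem external_potential_remainder_bound (ℏ a : ℝ) (hℏ : 0 < ℏ) (ha : 0 < a)
    (v : ℤ × ℤ → ℂ)
    (hv : Summable fun μ : ℤ × ℤ => ‖latticeVec μ‖ ^ 2 * ‖v μ‖)
    (g : EuclideanSpace ℝ (Fin 2) × EuclideanSpace ℝ (Fin 2) → ℂ)
    (hg : Integrable g)
    (η : EuclideanSpace ℝ (Fin 2) → ℂ) (hη : Measurable η)
    (Cη : ℝ) (hCη : ∀ x, ‖η x‖ ≤ Cη)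
    (φ : EuclideanSpace ℝ (Fin 2) → ℂ) (hφ : ContDiff ℝ 2 φ)
    (M : ℝ) (hM : ∀ q : EuclideanSpace ℝ (Fin 2), ‖iteratedFDeriv ℝ 2 φ q‖ ≤ M) :
    ‖∑' μ : ℤ × ℤ, v μ *
        ∫ p : EuclideanSpace ℝ (Fin 2) × EuclideanSpace ℝ (Fin 2),
          Complex.exp (Complex.I * (((inner ℝ (latticeVec μ) p.1 : ℝ) / a : ℝ) : ℂ)) *
            g p * η p.1 * (1 / (ℏ : ℂ)) *
            (φ (p.2 - (ℏ / (2 * a)) • latticeVec μ)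
              - φ (p.2 + (ℏ / (2 * a)) • latticeVec μ)
              + ((ℏ / a : ℝ) : ℂ) * fderiv ℝ φ p.2 (latticeVec μ))‖ ≤
      (ℏ / (4 * a ^ 2)) * (∑' μ : ℤ × ℤ, ‖latticeVec μ‖ ^ 2 * ‖v μ‖) *
        (∫ p : EuclideanSpace ℝ (Fin 2) × EuclideanSpace ℝ (Fin 2), ‖g p‖) * Cη * M := by
  have hM0 : 0 ≤ M := le_trans (norm_nonneg _) (hM 0)
  have hCη0 : 0 ≤ Cη := le_trans (norm_nonneg _) (hCη 0)
  have ha' : a ≠ 0 := ne_of_gt ha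
  have hℏ' : ℏ ≠ 0 := ne_of_gt hℏ
  have hG0 : 0 ≤ ∫ p : EuclideanSpace ℝ (Fin 2) × EuclideanSpace ℝ (Fin 2), ‖g p‖ :=
    integral_nonneg fun _ => norm_nonneg _
  set G : ℝ := ∫ p : EuclideanSpace ℝ (Fin 2) × EuclideanSpace ℝ (Fin 2), ‖g p‖ with hGdef
  -- remainder bound
  have hrem : ∀ (μ : ℤ × ℤ) (k : EuclideanSpace ℝ (Fin 2)),
      ‖φ (k - (ℏ / (2 * a)) • latticeVec μ) - φ (k + (ℏ / (2 * a)) • latticeVec μ)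
        + ((ℏ / a : ℝ) : ℂ) * fderiv ℝ φ k (latticeVec μ)‖
      ≤ ℏ ^ 2 / (4 * a ^ 2) * ‖latticeVec μ‖ ^ 2 * M := by
    intro μ k
    have hfh : ((ℏ / a : ℝ) : ℂ) * fderiv ℝ φ k (latticeVec μ)
        = 2 * fderiv ℝ φ k ((ℏ / (2 * a)) • latticeVec μ) := by
      rw [_root_.map_smul, Complex.real_smul]
      push_cast
      field_simp
    rw [hfh]
    have := sym_remainder hφ hM k ((ℏ / (2 * a)) • latticeVec μ)
    refine this.trans (le_of_eq ?_)
    rw [norm_smul, Real.norm_eq_abs, _root_.abs_of_nonneg (by positivity)]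
    field_simp
    ring
  -- pointwise integrand bound
  have hpt : ∀ (μ : ℤ × ℤ) (p : EuclideanSpace ℝ (Fin 2) × EuclideanSpace ℝ (Fin 2)),
      ‖Complex.exp (Complex.I * (((inner ℝ (latticeVec μ) p.1 : ℝ) / a : ℝ) : ℂ)) *
          g p * η p.1 * (1 / (ℏ : ℂ)) *
          (φ (p.2 - (ℏ / (2 * a)) • latticeVec μ)
            - φ (p.2 + (ℏ / (2 * a)) • latticeVec μ)
            + ((ℏ / a : ℝ) : ℂ) * fderiv ℝ φ p.2 (latticeVec μ))‖
      ≤ ‖g p‖ * (Cη * (ℏ / (4 * a ^ 2) * ‖latticeVec μ‖ ^ 2 * M)) := by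
    intro μ p
    have hexp : ‖Complex.exp (Complex.I * (((inner ℝ (latticeVec μ) p.1 : ℝ) / a : ℝ) : ℂ))‖
        = 1 := by
      rw [Complex.norm_exp]
      simp [Complex.mul_re]
    have hinv : ‖(1 : ℂ) / (ℏ : ℂ)‖ = 1 / ℏ := by
      rw [norm_div, norm_one, Complex.norm_real, Real.norm_eq_abs, abs_of_pos hℏ]
    rw [norm_mul, norm_mul, norm_mul, norm_mul, hexp, hinv, one_mul]
    calc ‖g p‖ * ‖η p.1‖ * (1 / ℏ) * ‖_‖
        ≤ ‖g p‖ * Cη * (1 / ℏ) * (ℏ ^ 2 / (4 * a ^ 2) * ‖latticeVec μ‖ ^ 2 * M) := by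
          refine mul_le_mul (mul_le_mul (mul_le_mul_of_nonneg_left (hCη p.1)
            (norm_nonneg _)) le_rfl (by positivity) (by positivity)) (hrem μ p.2)
            (norm_nonneg _) (by positivity)
      _ = ‖g p‖ * (Cη * (ℏ / (4 * a ^ 2) * ‖latticeVec μ‖ ^ 2 * M)) := by
          field_simp
  -- integral bound per μ
  have hI : ∀ μ : ℤ × ℤ,
      ‖∫ p : EuclideanSpace ℝ (Fin 2) × EuclideanSpace ℝ (Fin 2),
          Complex.exp (Complex.I * (((inner ℝ (latticeVec μ) p.1 : ℝ) / a : ℝ) : ℂ)) *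
            g p * η p.1 * (1 / (ℏ : ℂ)) *
            (φ (p.2 - (ℏ / (2 * a)) • latticeVec μ)
              - φ (p.2 + (ℏ / (2 * a)) • latticeVec μ)
              + ((ℏ / a : ℝ) : ℂ) * fderiv ℝ φ p.2 (latticeVec μ))‖
      ≤ G * (Cη * (ℏ / (4 * a ^ 2) * ‖latticeVec μ‖ ^ 2 * M)) := by
    intro μ
    refine (norm_integral_le_integral_norm _).trans ?_
    calc (∫ p, ‖Complex.exp (Complex.I * (((inner ℝ (latticeVec μ) p.1 : ℝ) / a : ℝ) : ℂ)) *
            g p * η p.1 * (1 / (ℏ : ℂ)) *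
            (φ (p.2 - (ℏ / (2 * a)) • latticeVec μ)
              - φ (p.2 + (ℏ / (2 * a)) • latticeVec μ)
              + ((ℏ / a : ℝ) : ℂ) * fderiv ℝ φ p.2 (latticeVec μ))‖)
        ≤ ∫ p, ‖g p‖ * (Cη * (ℏ / (4 * a ^ 2) * ‖latticeVec μ‖ ^ 2 * M)) := by
          refine integral_mono_of_nonneg (Filter.Eventually.of_forall fun p => norm_nonneg _)
            (hg.norm.mul_const _) (Filter.Eventually.of_forall (hpt μ))
      _ = G * (Cη * (ℏ / (4 * a ^ 2) * ‖latticeVec μ‖ ^ 2 * M)) := by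
          rw [integral_mul_const]
  -- per-term bound
  have hterm : ∀ μ : ℤ × ℤ,
      ‖v μ * ∫ p : EuclideanSpace ℝ (Fin 2) × EuclideanSpace ℝ (Fin 2),
          Complex.exp (Complex.I * (((inner ℝ (latticeVec μ) p.1 : ℝ) / a : ℝ) : ℂ)) *
            g p * η p.1 * (1 / (ℏ : ℂ)) *
            (φ (p.2 - (ℏ / (2 * a)) • latticeVec μ)
              - φ (p.2 + (ℏ / (2 * a)) • latticeVec μ)
              + ((ℏ / a : ℝ) : ℂ) * fderiv ℝ φ p.2 (latticeVec μ))‖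
      ≤ ℏ / (4 * a ^ 2) * G * Cη * M * (‖latticeVec μ‖ ^ 2 * ‖v μ‖) := by
    intro μ
    rw [norm_mul]
    calc ‖v μ‖ * ‖_‖ ≤ ‖v μ‖ * (G * (Cη * (ℏ / (4 * a ^ 2) * ‖latticeVec μ‖ ^ 2 * M))) :=
          mul_le_mul_of_nonneg_left (hI μ) (norm_nonneg _)
      _ = ℏ / (4 * a ^ 2) * G * Cη * M * (‖latticeVec μ‖ ^ 2 * ‖v μ‖) := by ring
  have hsum2 : Summable fun μ : ℤ × ℤ =>
      ℏ / (4 * a ^ 2) * G * Cη * M * (‖latticeVec μ‖ ^ 2 * ‖v μ‖) := hv.mul_left _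
  have hsum1 : Summable fun μ : ℤ × ℤ =>
      ‖v μ * ∫ p : EuclideanSpace ℝ (Fin 2) × EuclideanSpace ℝ (Fin 2),
          Complex.exp (Complex.I * (((inner ℝ (latticeVec μ) p.1 : ℝ) / a : ℝ) : ℂ)) *
            g p * η p.1 * (1 / (ℏ : ℂ)) *
            (φ (p.2 - (ℏ / (2 * a)) • latticeVec μ)
              - φ (p.2 + (ℏ / (2 * a)) • latticeVec μ)
              + ((ℏ / a : ℝ) : ℂ) * fderiv ℝ φ p.2 (latticeVec μ))‖ :=
    Summable.of_nonneg_of_le (fun _ => norm_nonneg _) hterm hsum2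
  calc ‖∑' μ : ℤ × ℤ, v μ * _‖
      ≤ ∑' μ : ℤ × ℤ, ‖v μ * ∫ p : EuclideanSpace ℝ (Fin 2) × EuclideanSpace ℝ (Fin 2),
          Complex.exp (Complex.I * (((inner ℝ (latticeVec μ) p.1 : ℝ) / a : ℝ) : ℂ)) *
            g p * η p.1 * (1 / (ℏ : ℂ)) *
            (φ (p.2 - (ℏ / (2 * a)) • latticeVec μ)
              - φ (p.2 + (ℏ / (2 * a)) • latticeVec μ)
              + ((ℏ / a : ℝ) : ℂ) * fderiv ℝ φ p.2 (latticeVec μ))‖ :=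
        norm_tsum_le_tsum_norm hsum1
    _ ≤ ∑' μ : ℤ × ℤ, ℏ / (4 * a ^ 2) * G * Cη * M * (‖latticeVec μ‖ ^ 2 * ‖v μ‖) :=
        Summable.tsum_le_tsum hterm hsum1 hsum2
    _ = ℏ / (4 * a ^ 2) * G * Cη * M * ∑' μ : ℤ × ℤ, ‖latticeVec μ‖ ^ 2 * ‖v μ‖ :=
        tsum_mul_left
    _ = ℏ / (4 * a ^ 2) * (∑' μ : ℤ × ℤ, ‖latticeVec μ‖ ^ 2 * ‖v μ‖) * G * Cη * M := by ring
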